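/- For N sufficiently large, the middle 1/N-th Cantor set X contains a 3-term arithmetic progression: there exist x ∈ ℝ and d > 0 with x, x+d, x+2d ∈ X. -/

import Mathlib

open Set

/-- ratio (N-1)/(2N) of each half of the middle-1/N Cantor construction -/
noncomputable def cantorRatio (N : ℕ) : ℝ := (N - 1) / (2 * N)

/-- k-th stage C_k of the middle 1/N Cantor set -/
noncomputable def cantorStage (N : ℕ) : ℕ → Set ℝ
  | 0 => Set.Icc 0 1
  | k + 1 => (fun x => cantorRatio N * x) '' cantorStage N k ∪
      (fun x => cantorRatio N * x + (N + 1) / (2 * N)) '' cantorStage N k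

/-- the middle 1/N Cantor set -/
noncomputable def middleCantorSet (N : ℕ) : Set ℝ := ⋂ k, cantorStage N k

/-- number of stages whose removed middle intervals have length at least δ -/
noncomputable def numStages (N : ℕ) (δ : ℝ) : ℕ :=
  sSup {j : ℕ | δ ≤ 1 / N * cantorRatio N ^ (j - 1)}

/-- X_δ : perform only the removal steps removing intervals of length ≥ δ -/
noncomputable def cantorApprox (N : ℕ) (δ : ℝ) : Set ℝ := cantorStage N (numStages N δ)

/- ------------- auxiliary development ------------- -/

/-- greedy remainder sequence -/
noncomputable def apT (r : ℝ) : ℕ → ℝ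
  | 0 => -1 / r
  | k + 1 => (apT r k - ((max (-2) (min 2 (round (apT r k))) : ℤ) : ℝ)) / r

/-- greedy coefficient sequence, values in [-2,2] -/
noncomputable def apC (r : ℝ) (k : ℕ) : ℤ := max (-2) (min 2 (round (apT r k)))

lemma apC_lb (r : ℝ) (k : ℕ) : -2 ≤ apC r k := le_max_left _ _
lemma apC_ub (r : ℝ) (k : ℕ) : apC r k ≤ 2 :=
  max_le (by norm_num) (min_le_left _ _)

lemma apT_succ (r : ℝ) (k : ℕ) :
    apT r (k + 1) = (apT r k - (apC r k : ℝ)) / r := rfl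

lemma apT_bound {r : ℝ} (hr1 : 1/3 ≤ r) (hr2 : r < 1/2) (k : ℕ) :
    |apT r k| ≤ 2 / (1 - r) := by
  have hr0 : 0 < r := lt_of_lt_of_le (by norm_num) hr1
  have h1r : 0 < 1 - r := by linarith
  have h4 : 2 / (1 - r) - 2 = 2 * r / (1 - r) := by
    field_simp
    ring
  have hMr : (1:ℝ) ≤ 2 * r / (1 - r) := by
    rw [le_div_iff₀ h1r]; linarith
  induction k with
  | zero =>
      show |(-1 / r)| ≤ _
      rw [abs_div, abs_neg, abs_one, abs_of_pos hr0, div_le_div_iff₀ hr0 h1r]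
      linarith
  | succ k ih =>
      have key : |apT r k - (apC r k : ℝ)| ≤ 2 * r / (1 - r) := by
        set T := apT r k with hT
        have hround := abs_sub_round T
        have hab := abs_le.1 hround
        have hih := abs_le.1 ih
        rcases le_or_gt 3 (round T) with h3 | h3
        · have hc : apC r k = 2 := by
            unfold apC
            rw [← hT, min_eq_left (by omega : (2:ℤ) ≤ round T)]
            norm_num
          have hrT : (3:ℝ) ≤ (round T : ℝ) := by exact_mod_cast h3
          have hT52 : (5:ℝ)/2 ≤ T := by linarith [hab.1]
          rw [hc, abs_of_nonneg (by push_cast; linarith)]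
          push_cast
          linarith [hih.2]
        · rcases le_or_gt (round T) (-3) with h3' | h3'
          · have hc : apC r k = -2 := by
              unfold apC
              rw [← hT, min_eq_right (by omega : round T ≤ 2)]
              exact max_eq_left (by omega)
            have hrT : ((round T : ℤ) : ℝ) ≤ -3 := by exact_mod_cast h3'
            have hT52 : T ≤ -(5:ℝ)/2 := by linarith [hab.2]
            rw [hc, abs_of_nonpos (by push_cast; linarith)]
            push_cast
            linarith [hih.1]
          · have hc : apC r k = round T := by
              unfold apC
              rw [← hT, min_eq_right (by omega : round T ≤ 2)]
              exact max_eq_right (by omega)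
            rw [hc]
            calc |T - (round T : ℝ)| ≤ 1/2 := hround
              _ ≤ 2 * r / (1 - r) := by linarith
      rw [apT_succ, abs_div, abs_of_pos hr0, div_le_iff₀ hr0]
      calc |apT r k - (apC r k : ℝ)| ≤ 2 * r / (1 - r) := key
        _ = 2 / (1 - r) * r := by ring

/-- digit sequences -/
noncomputable def apA (r : ℝ) : ℕ → ℝ
  | 0 => 1
  | k + 1 => if 1 ≤ apC r k then 1 else 0

noncomputable def apB (r : ℝ) : ℕ → ℝ
  | 0 => 0
  | k + 1 => if apC r k ≤ -1 then 1 else 0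

noncomputable def apG (r : ℝ) : ℕ → ℝ
  | 0 => 0
  | k + 1 => if apC r k = 2 ∨ apC r k = -1 then 1 else 0

lemma apA01 (r : ℝ) (k : ℕ) : apA r k = 0 ∨ apA r k = 1 := by
  cases k with
  | zero => right; rfl
  | succ k => exact Or.symm (ite_eq_or_eq _ _ _)

lemma apB01 (r : ℝ) (k : ℕ) : apB r k = 0 ∨ apB r k = 1 := by
  cases k with
  | zero => left; rfl
  | succ k => exact Or.symm (ite_eq_or_eq _ _ _)

lemma apG01 (r : ℝ) (k : ℕ) : apG r k = 0 ∨ apG r k = 1 := by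
  cases k with
  | zero => left; rfl
  | succ k => exact Or.symm (ite_eq_or_eq _ _ _)

lemma ap_combo (r : ℝ) (k : ℕ) :
    apA r (k + 1) + apG r (k + 1) - 2 * apB r (k + 1) = (apC r k : ℝ) := by
  have h1 := apC_lb r k
  have h2 := apC_ub r k
  show (if 1 ≤ apC r k then (1:ℝ) else 0) + (if apC r k = 2 ∨ apC r k = -1 then (1:ℝ) else 0)
      - 2 * (if apC r k ≤ -1 then (1:ℝ) else 0) = (apC r k : ℝ)
  set c := apC r k with hc
  clear_value c
  interval_cases c <;> norm_num

/-- summability of digit series -/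
lemma ap_summable {r : ℝ} (hr0 : 0 ≤ r) (hr1 : r < 1) {ε : ℕ → ℝ}
    (hε : ∀ i, ε i = 0 ∨ ε i = 1) : Summable (fun i => ε i * r ^ i) := by
  refine Summable.of_nonneg_of_le (fun i => ?_) (fun i => ?_)
    (summable_geometric_of_lt_one hr0 hr1)
  · rcases hε i with h | h <;> rw [h]
    · rw [zero_mul]
    · rw [one_mul]; positivity
  · rcases hε i with h | h <;> rw [h]
    · rw [zero_mul]; positivity
    · rw [one_mul]

lemma ap_tsum_le {r : ℝ} (hr0 : 0 ≤ r) (hr1 : r < 1) {ε : ℕ → ℝ}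
    (hε : ∀ i, ε i = 0 ∨ ε i = 1) : ∑' i, ε i * r ^ i ≤ (1 - r)⁻¹ := by
  rw [← tsum_geometric_of_lt_one hr0 hr1]
  apply Summable.tsum_le_tsum _ (ap_summable hr0 hr1 hε) (summable_geometric_of_lt_one hr0 hr1)
  intro i; rcases hε i with h | h <;> rw [h]
  · rw [zero_mul]; positivity
  · rw [one_mul]

lemma ap_tsum_nonneg {r : ℝ} (hr0 : 0 ≤ r) {ε : ℕ → ℝ}
    (hε : ∀ i, ε i = 0 ∨ ε i = 1) : 0 ≤ ∑' i, ε i * r ^ i := by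
  apply tsum_nonneg
  intro i; rcases hε i with h | h <;> rw [h]
  · rw [zero_mul]
  · rw [one_mul]; positivity

lemma ap_tsum_shift {r : ℝ} (hr0 : 0 ≤ r) (hr1 : r < 1) {ε : ℕ → ℝ}
    (hε : ∀ i, ε i = 0 ∨ ε i = 1) :
    ∑' i, ε i * r ^ i = ε 0 + r * ∑' i, ε (i + 1) * r ^ i := by
  rw [Summable.tsum_eq_zero_add (ap_summable hr0 hr1 hε)]
  congr 1
  · simp
  · rw [← tsum_mul_left]
    congr 1; funext i; ring

lemma cantorRatio_facts (N : ℕ) (hN : 3 ≤ N) :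
    1/3 ≤ cantorRatio N ∧ cantorRatio N < 1/2 ∧
    ((N : ℝ) + 1) / (2 * N) = 1 - cantorRatio N := by
  have hN3 : (3:ℝ) ≤ (N:ℝ) := by exact_mod_cast hN
  have hNpos : (0:ℝ) < (N:ℝ) := by linarith
  unfold cantorRatio
  refine ⟨?_, ?_, ?_⟩
  · rw [div_le_div_iff₀ (by norm_num) (by linarith)]; linarith
  · rw [div_lt_div_iff₀ (by linarith) (by norm_num)]; linarith
  · field_simp
    ring

/-- membership criterion: digit expansions belong to every stage -/
lemma stage_mem (N : ℕ) (hN : 3 ≤ N) (k : ℕ) :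
    ∀ (ε : ℕ → ℝ), (∀ i, ε i = 0 ∨ ε i = 1) →
    (((N : ℝ) + 1) / (2 * N)) * ∑' i, ε i * (cantorRatio N) ^ i ∈ cantorStage N k := by
  obtain ⟨hr1, hr2, ht⟩ := cantorRatio_facts N hN
  set r := cantorRatio N with hrdef
  set t := ((N : ℝ) + 1) / (2 * (N:ℝ)) with htdef
  have hr0 : (0:ℝ) ≤ r := le_trans (by norm_num) hr1
  have hrlt1 : r < 1 := lt_trans hr2 (by norm_num)
  have h1r : (0:ℝ) < 1 - r := by linarith
  induction k with
  | zero =>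
      intro ε hε
      constructor
      · have h1 := ap_tsum_nonneg hr0 hε
        have ht0 : 0 ≤ t := by rw [ht]; linarith
        exact mul_nonneg ht0 h1
      · calc t * ∑' i, ε i * r ^ i ≤ t * (1 - r)⁻¹ := by
              apply mul_le_mul_of_nonneg_left (ap_tsum_le hr0 hrlt1 hε)
              rw [ht]; linarith
          _ = 1 := by rw [ht]; field_simp
  | succ k ih =>
      intro ε hε
      set ε' : ℕ → ℝ := fun i => ε (i + 1) with hε'def
      have hε' : ∀ i, ε' i = 0 ∨ ε' i = 1 := fun i => hε (i + 1)
      have hmem := ih ε' hε'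
      have hshift := ap_tsum_shift hr0 hrlt1 hε
      rcases hε 0 with h0 | h0
      · left
        refine ⟨t * ∑' i, ε' i * r ^ i, hmem, ?_⟩
        show r * (t * ∑' i, ε' i * r ^ i) = _
        rw [hshift, h0]; ring
      · right
        refine ⟨t * ∑' i, ε' i * r ^ i, hmem, ?_⟩
        show r * (t * ∑' i, ε' i * r ^ i) + ((N:ℝ) + 1) / (2 * N) = _
        rw [hshift, h0, ← htdef]; ring

theorem stmt14 : ∃ N₀ : ℕ, ∀ N : ℕ, N₀ ≤ N →
    ∃ x d : ℝ, 0 < d ∧ x ∈ middleCantorSet N ∧ x + d ∈ middleCantorSet N ∧ x + 2 * d ∈ middleCantorSet N := by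
  use 3
  intro N hN
  obtain ⟨hr1, hr2, ht⟩ := cantorRatio_facts N hN
  have hN3 : (3:ℝ) ≤ (N:ℝ) := by exact_mod_cast hN
  set r := cantorRatio N with hrdef
  set t := ((N : ℝ) + 1) / (2 * (N:ℝ)) with htdef
  have hr0 : (0:ℝ) < r := lt_of_lt_of_le (by norm_num) hr1
  have hrlt1 : r < 1 := lt_trans hr2 (by norm_num)
  have h1r : (0:ℝ) < 1 - r := by linarith
  have ht0 : 0 < t := by rw [ht]; linarith
  -- summabilities
  have hSA := ap_summable hr0.le hrlt1 (apA01 r)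
  have hSB := ap_summable hr0.le hrlt1 (apB01 r)
  have hSG := ap_summable hr0.le hrlt1 (apG01 r)
  -- the three points
  set a := t * ∑' i, apA r i * r ^ i with hadef
  set b := t * ∑' i, apB r i * r ^ i with hbdef
  set g := t * ∑' i, apG r i * r ^ i with hgdef
  -- memberships
  have hamem : a ∈ middleCantorSet N :=
    mem_iInter.2 fun k => stage_mem N hN k (apA r) (apA01 r)
  have hbmem : b ∈ middleCantorSet N :=
    mem_iInter.2 fun k => stage_mem N hN k (apB r) (apB01 r)
  have hgmem : g ∈ middleCantorSet N :=
    mem_iInter.2 fun k => stage_mem N hN k (apG r) (apG01 r)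
  -- F series
  set F : ℕ → ℝ := fun i => (apA r i + apG r i - 2 * apB r i) * r ^ i with hFdef
  have hFeq : ∀ i, F i = apA r i * r ^ i + apG r i * r ^ i - 2 * (apB r i * r ^ i) := by
    intro i; rw [hFdef]; ring
  have hSF : Summable F := by
    have : F = fun i => apA r i * r ^ i + apG r i * r ^ i - 2 * (apB r i * r ^ i) :=
      funext hFeq
    rw [this]
    exact ((hSA.add hSG).sub (hSB.mul_left 2))
  -- partial sums of F
  have hF0 : F 0 = 1 := by
    show (apA r 0 + apG r 0 - 2 * apB r 0) * r ^ 0 = 1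
    show ((1:ℝ) + 0 - 2 * 0) * r ^ 0 = 1
    norm_num
  have hFsucc : ∀ k, F (k + 1) = (apC r k : ℝ) * r ^ (k + 1) := by
    intro k
    show (apA r (k+1) + apG r (k+1) - 2 * apB r (k+1)) * r ^ (k+1) = _
    rw [ap_combo]
  have hpartial : ∀ m, ∑ i ∈ Finset.range (m + 1), F i = -(apT r m * r ^ (m + 1)) := by
    intro m
    rw [Finset.sum_range_succ', hF0]
    have e1 : ∀ k, F (k + 1) = (fun j => apT r j * r ^ (j + 1)) k -
        (fun j => apT r j * r ^ (j + 1)) (k + 1) := by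
      intro k
      rw [hFsucc]
      have hc : (apC r k : ℝ) = apT r k - r * apT r (k + 1) := by
        have h := apT_succ r k
        field_simp [hr0.ne'] at h
        linarith
      rw [hc]
      ring
    calc (∑ k ∈ Finset.range m, F (k + 1)) + 1
        = (∑ k ∈ Finset.range m, ((fun j => apT r j * r ^ (j + 1)) k -
            (fun j => apT r j * r ^ (j + 1)) (k + 1))) + 1 := by
          congr 1; exact Finset.sum_congr rfl fun k _ => e1 k
      _ = (apT r 0 * r ^ 1 - apT r m * r ^ (m + 1)) + 1 := by
          rw [Finset.sum_range_sub' (fun j => apT r j * r ^ (j + 1)) m]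
      _ = -(apT r m * r ^ (m + 1)) := by
          have : apT r 0 * r ^ 1 = -1 := by
            show -1 / r * r ^ 1 = -1
            rw [pow_one]
            field_simp
          rw [this]; ring
  -- sum of F is zero
  have htendsto : Filter.Tendsto (fun n => ∑ i ∈ Finset.range n, F i)
      Filter.atTop (nhds 0) := by
    apply squeeze_zero_norm (a := fun n => 2 / (1 - r) * r ^ n)
    · intro n
      cases n with
      | zero =>
          have hpos : (0:ℝ) ≤ 2 / (1 - r) * r ^ 0 := by
            rw [pow_zero, mul_one]
            exact (div_pos (by norm_num) h1r).le
          simpa using hpos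
      | succ m =>
          rw [hpartial m, Real.norm_eq_abs, abs_neg, abs_mul, abs_pow,
            abs_of_nonneg hr0.le]
          exact mul_le_mul_of_nonneg_right (apT_bound hr1 hr2 m) (by positivity)
    · simpa using (tendsto_pow_atTop_nhds_zero_of_lt_one hr0.le hrlt1).const_mul (2 / (1 - r))
  have hsum0 : ∑' i, F i = 0 :=
    ((hSF.hasSum_iff_tendsto_nat).2 htendsto).tsum_eq
  -- linear relation a + g = 2 b
  have hlin : a + g - 2 * b = t * ∑' i, F i := by
    rw [hadef, hgdef, hbdef]
    have : ∑' i, F i = (∑' i, apA r i * r ^ i) + (∑' i, apG r i * r ^ i)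
        - 2 * ∑' i, apB r i * r ^ i := by
      rw [show F = fun i => apA r i * r ^ i + apG r i * r ^ i - 2 * (apB r i * r ^ i)
        from funext hFeq]
      rw [Summable.tsum_sub (hSA.add hSG) (hSB.mul_left 2), Summable.tsum_add hSA hSG, tsum_mul_left]
    rw [this]; ring
  rw [hsum0, mul_zero] at hlin
  -- bounds: a ≥ t, b ≤ r
  have haget : t ≤ a := by
    have h1 : apA r 0 * r ^ 0 ≤ ∑' i, apA r i * r ^ i := by
      apply Summable.le_tsum hSA 0
      intro j _
      rcases apA01 r j with h | h <;> rw [h] <;> positivity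
    have h2 : apA r 0 * r ^ 0 = 1 := by
      show (1:ℝ) * r ^ 0 = 1; norm_num
    rw [hadef]
    calc t = t * 1 := by ring
      _ ≤ t * ∑' i, apA r i * r ^ i := by
          apply mul_le_mul_of_nonneg_left _ ht0.le
          rw [← h2]; exact h1
  have hbler : b ≤ r := by
    have hshift := ap_tsum_shift hr0.le hrlt1 (apB01 r)
    have hB0 : apB r 0 = 0 := rfl
    have hle : ∑' i, apB r (i + 1) * r ^ i ≤ (1 - r)⁻¹ :=
      ap_tsum_le hr0.le hrlt1 (fun i => apB01 r (i + 1))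
    rw [hbdef, hshift, hB0]
    calc t * (0 + r * ∑' i, apB r (i + 1) * r ^ i)
        ≤ t * (0 + r * (1 - r)⁻¹) := by
          apply mul_le_mul_of_nonneg_left _ ht0.le
          apply add_le_add le_rfl
          exact mul_le_mul_of_nonneg_left hle hr0.le
      _ = r := by rw [ht]; field_simp; ring
  have hab : b < a := lt_of_le_of_lt hbler (lt_of_lt_of_le (by linarith) haget)
  -- assemble the AP: x = g, d = b - g = a - b
  refine ⟨g, b - g, ?_, hgmem, ?_, ?_⟩
  · have : b - g = a - b := by linarith
    rw [this]; linarith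
  · have : g + (b - g) = b := by ring
    rw [this]; exact hbmem
  · have : g + 2 * (b - g) = a := by linarith
    rw [this]; exact hamem
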